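/- An n-poised set of nodes contains at most n+1 collinear nodes. -/

import Mathlib

open MvPolynomial

noncomputable section
open scoped Classical

/-- Bivariate real polynomials. -/
abbrev Poly2 := MvPolynomial (Fin 2) ℝ

/-- Evaluation of a bivariate polynomial at a point of the plane. -/
def evalPt (A : Fin 2 → ℝ) (p : Poly2) : ℝ := MvPolynomial.eval A p

/-- A line is (identified with) a polynomial of total degree 1. -/
def IsLine (ℓ : Poly2) : Prop := ℓ.totalDegree = 1

/-- `X` is `n`-poised: unique interpolation from Π_n at the nodes of `X`. -/
def Poised (n : ℕ) (X : Finset (Fin 2 → ℝ)) : Prop :=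
  ∀ c : (Fin 2 → ℝ) → ℝ,
    ∃! p : Poly2, p.totalDegree ≤ n ∧ ∀ A ∈ X, evalPt A p = c A

/-- `p` is an `n`-fundamental polynomial of the node `A` of `X`. -/
def IsFund (n : ℕ) (X : Finset (Fin 2 → ℝ)) (A : Fin 2 → ℝ) (p : Poly2) : Prop :=
  p.totalDegree ≤ n ∧ evalPt A p = 1 ∧ ∀ B ∈ X, B ≠ A → evalPt B p = 0

/-- A `GC_n`-set: an `n`-poised set all of whose nodes have fundamental
polynomials that are products of `n` linear factors. -/
def GCSet (n : ℕ) (X : Finset (Fin 2 → ℝ)) : Prop :=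
  Poised n X ∧
    ∀ A ∈ X, ∃ f : Fin n → Poly2, (∀ i, IsLine (f i)) ∧ IsFund n X A (∏ i, f i)

/-- The node `A` uses the line `ℓ`: `ℓ` divides a fundamental polynomial of `A`. -/
def Uses (n : ℕ) (X : Finset (Fin 2 → ℝ)) (A : Fin 2 → ℝ) (ℓ : Poly2) : Prop :=
  ∃ p, IsFund n X A p ∧ ℓ ∣ p

/-- The nodes of `X` lying on the line `ℓ`. -/
def nodesOn (X : Finset (Fin 2 → ℝ)) (ℓ : Poly2) : Finset (Fin 2 → ℝ) :=
  X.filter (fun A => evalPt A ℓ = 0)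

/-- `X` contains no 5 collinear nodes. -/
def NoFiveCollinear (X : Finset (Fin 2 → ℝ)) : Prop :=
  ∀ ℓ : Poly2, IsLine ℓ → (nodesOn X ℓ).card ≤ 4

/-- An `n`-poised set contains at most `n+1` collinear nodes. -/

-- degree bound for substitution of degree ≤ 1 polynomials
lemma natDegree_aeval_le' (p : MvPolynomial (Fin 2) ℝ) (f : Fin 2 → Polynomial ℝ)
    (hf : ∀ i, (f i).natDegree ≤ 1) :
    (MvPolynomial.aeval f p).natDegree ≤ p.totalDegree := by
  rw [MvPolynomial.aeval_def, MvPolynomial.eval₂_eq]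
  apply Polynomial.natDegree_sum_le_of_forall_le
  intro m hm
  calc (algebraMap ℝ (Polynomial ℝ) (coeff m p) * ∏ i ∈ m.support, f i ^ m i).natDegree
      ≤ (∏ i ∈ m.support, f i ^ m i).natDegree := Polynomial.natDegree_C_mul_le _ _
    _ ≤ ∑ i ∈ m.support, (f i ^ m i).natDegree := Polynomial.natDegree_prod_le _ _
    _ ≤ ∑ i ∈ m.support, m i * 1 := Finset.sum_le_sum (fun i _ =>
        le_trans Polynomial.natDegree_pow_le (Nat.mul_le_mul_left _ (hf i)))
    _ = ∑ i ∈ m.support, m i := by simp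
    _ ≤ p.totalDegree := MvPolynomial.le_totalDegree hm

-- eval of composition
lemma eval_aeval' (p : MvPolynomial (Fin 2) ℝ) (f : Fin 2 → Polynomial ℝ) (t : ℝ) :
    Polynomial.eval t (MvPolynomial.aeval f p) =
      MvPolynomial.eval (fun i => Polynomial.eval t (f i)) p := by
  rw [MvPolynomial.aeval_def, MvPolynomial.eval₂_eq, MvPolynomial.eval_eq]
  simp [Polynomial.eval_finset_sum, Polynomial.eval_prod]

lemma line_structure (ℓ : MvPolynomial (Fin 2) ℝ) (h : ℓ.totalDegree ≤ 1) :
    ℓ = C (coeff (Finsupp.single 0 1) ℓ) * X 0 + C (coeff (Finsupp.single 1 1) ℓ) * X 1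
        + C (coeff 0 ℓ) := by
  apply MvPolynomial.ext
  intro m
  have hdet : ∀ m' : Fin 2 →₀ ℕ, m 0 = m' 0 → m 1 = m' 1 → m = m' := by
    intro m' h0 h1
    ext j; fin_cases j <;> assumption
  have hm2 : (m.sum fun _ e => e) = m 0 + m 1 := by
    rw [Finsupp.sum_fintype _ _ (fun _ => rfl), Fin.sum_univ_two]
  rcases Nat.lt_or_ge (m 0 + m 1) 2 with hlt | hge
  · have hcases : (m 0 = 0 ∧ m 1 = 0) ∨ (m 0 = 1 ∧ m 1 = 0) ∨ (m 0 = 0 ∧ m 1 = 1) := by omega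
    rcases hcases with ⟨h0, h1⟩ | ⟨h0, h1⟩ | ⟨h0, h1⟩
    · have hm : m = 0 := hdet 0 h0 h1
      subst hm
      simp [coeff_C_mul, coeff_X', coeff_C, Finsupp.single_eq_zero]
    · have hm : m = Finsupp.single 0 1 := hdet _ (by simp [h0]) (by simp [h1])
      subst hm
      simp [coeff_C_mul, coeff_X', coeff_C, Finsupp.single_eq_single_iff,
        Finsupp.single_eq_zero, eq_comm]
    · have hm : m = Finsupp.single 1 1 := hdet _ (by simp [h0]) (by simp [h1])
      subst hm
      simp [coeff_C_mul, coeff_X', coeff_C, Finsupp.single_eq_single_iff,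
        Finsupp.single_eq_zero, eq_comm]
  · have hz : coeff m ℓ = 0 := by
      apply MvPolynomial.coeff_eq_zero_of_totalDegree_lt
      rw [show (∑ i ∈ m.support, m i) = m.sum fun _ e => e from rfl, hm2]; omega
    rw [hz]
    have h0 : m ≠ 0 := by
      intro hm; rw [hm] at hge; simp at hge
    have h1 : Finsupp.single (0 : Fin 2) 1 ≠ m := by
      intro hm; rw [← hm] at hge; simp at hge
    have h2 : Finsupp.single (1 : Fin 2) 1 ≠ m := by
      intro hm; rw [← hm] at hge; simp at hge
    simp [coeff_C_mul, coeff_X', coeff_C, h1, h2, Ne.symm h0]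

lemma key_lemma (n : ℕ) (X : Finset (Fin 2 → ℝ)) (hX : Poised n X) (ℓ : Poly2)
    (t : (Fin 2 → ℝ) → ℝ) (f : Fin 2 → Polynomial ℝ)
    (hf : ∀ i, (f i).natDegree ≤ 1)
    (hft : ∀ B, evalPt B ℓ = 0 → ∀ i, Polynomial.eval (t B) (f i) = B i) :
    (nodesOn X ℓ).card ≤ n + 1 := by
  by_contra hcard
  push_neg at hcard
  obtain ⟨A, hA⟩ : (nodesOn X ℓ).Nonempty := Finset.card_pos.mp (by omega)
  have hAX : A ∈ X := (Finset.mem_filter.mp hA).1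
  have hAl : evalPt A ℓ = 0 := (Finset.mem_filter.mp hA).2
  obtain ⟨p, ⟨hpd, hpi⟩, -⟩ := hX (fun B => if B = A then 1 else 0)
  set q := MvPolynomial.aeval f p with hq
  have heval : ∀ B, evalPt B ℓ = 0 →
      Polynomial.eval (t B) q = MvPolynomial.eval B p := by
    intro B hB
    rw [hq, eval_aeval']
    have hfun : (fun i => Polynomial.eval (t B) (f i)) = B := funext (hft B hB)
    rw [hfun]
  have hq1 : Polynomial.eval (t A) q = 1 := by
    rw [heval A hAl]
    simpa [evalPt] using hpi A hAX
  have hqne : q ≠ 0 := by intro h; rw [h] at hq1; simp at hq1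
  have hsub : ((nodesOn X ℓ).erase A).image t ⊆ q.roots.toFinset := by
    intro s hs
    obtain ⟨B, hB, rfl⟩ := Finset.mem_image.mp hs
    have hBA : B ≠ A := (Finset.mem_erase.mp hB).1
    have hBm : B ∈ nodesOn X ℓ := (Finset.mem_erase.mp hB).2
    have hBX : B ∈ X := (Finset.mem_filter.mp hBm).1
    have hBl : evalPt B ℓ = 0 := (Finset.mem_filter.mp hBm).2
    have : Polynomial.eval (t B) q = 0 := by
      rw [heval B hBl]
      simpa [evalPt, hBA] using hpi B hBX
    rw [Multiset.mem_toFinset, Polynomial.mem_roots hqne]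
    exact this
  have hinj : Set.InjOn t ((nodesOn X ℓ).erase A : Finset (Fin 2 → ℝ)) := by
    intro B hB B' hB' hBB'
    have hBl : evalPt B ℓ = 0 :=
      (Finset.mem_filter.mp (Finset.mem_erase.mp (Finset.mem_coe.mp hB)).2).2
    have hBl' : evalPt B' ℓ = 0 :=
      (Finset.mem_filter.mp (Finset.mem_erase.mp (Finset.mem_coe.mp hB')).2).2
    funext i
    rw [← hft B hBl i, ← hft B' hBl' i, hBB']
  have hc1 : n + 1 ≤ ((nodesOn X ℓ).erase A).card := by
    rw [Finset.card_erase_of_mem hA]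
    omega
  have hc2 : ((nodesOn X ℓ).erase A).card = (((nodesOn X ℓ).erase A).image t).card :=
    (Finset.card_image_of_injOn hinj).symm
  have hc3 : (((nodesOn X ℓ).erase A).image t).card ≤ q.roots.toFinset.card :=
    Finset.card_le_card hsub
  have hc4 : q.roots.toFinset.card ≤ q.natDegree :=
    le_trans (Multiset.toFinset_card_le _) (Polynomial.card_roots' q)
  have hc5 : q.natDegree ≤ n := le_trans (natDegree_aeval_le' p f hf) hpd
  omega

theorem stmt2 (n : ℕ) (X : Finset (Fin 2 → ℝ)) (hX : Poised n X)
    (ℓ : Poly2) (hℓ : IsLine ℓ) :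
    (nodesOn X ℓ).card ≤ n + 1 := by
  have hle : ℓ.totalDegree ≤ 1 := le_of_eq hℓ
  set a := coeff (Finsupp.single 0 1) ℓ with ha_def
  set b := coeff (Finsupp.single 1 1) ℓ with hb_def
  set c0 := coeff 0 ℓ with hc0_def
  have hstruct := line_structure ℓ hle
  rw [← ha_def, ← hb_def, ← hc0_def] at hstruct
  have hevalℓ : ∀ P : Fin 2 → ℝ, evalPt P ℓ = a * P 0 + b * P 1 + c0 := by
    intro P
    rw [evalPt, hstruct]
    simp
  have hab : a ≠ 0 ∨ b ≠ 0 := by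
    by_contra hc
    push_neg at hc
    obtain ⟨ha, hb⟩ := hc
    rw [ha, hb] at hstruct
    simp at hstruct
    have : ℓ.totalDegree = 0 := by rw [hstruct]; exact MvPolynomial.totalDegree_C _
    rw [IsLine] at hℓ
    omega
  by_cases hb : b = 0
  · have ha : a ≠ 0 := by tauto
    apply key_lemma n X hX ℓ (fun B => B 1)
      ![Polynomial.C (-c0/a) + Polynomial.C (-b/a) * Polynomial.X, Polynomial.X]
    · intro i
      fin_cases i
      · refine le_trans (Polynomial.natDegree_add_le _ _) (max_le (by simp) ?_)
        exact le_trans (Polynomial.natDegree_C_mul_le _ _) Polynomial.natDegree_X_le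
      · simpa using Polynomial.natDegree_X_le
    · intro B hB i
      rw [hevalℓ B] at hB
      fin_cases i
      · show Polynomial.eval (B 1) (Polynomial.C (-c0/a) + Polynomial.C (-b/a) * Polynomial.X) = B 0
        simp only [Polynomial.eval_add, Polynomial.eval_mul, Polynomial.eval_C, Polynomial.eval_X]
        rw [div_mul_eq_mul_div, ← add_div, div_eq_iff ha]
        linarith
      · simp
  · apply key_lemma n X hX ℓ (fun B => B 0)
      ![Polynomial.X, Polynomial.C (-c0/b) + Polynomial.C (-a/b) * Polynomial.X]
    · intro i
      fin_cases i
      · simpa using Polynomial.natDegree_X_le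
      · refine le_trans (Polynomial.natDegree_add_le _ _) (max_le (by simp) ?_)
        exact le_trans (Polynomial.natDegree_C_mul_le _ _) Polynomial.natDegree_X_le
    · intro B hB i
      rw [hevalℓ B] at hB
      fin_cases i
      · simp
      · show Polynomial.eval (B 0) (Polynomial.C (-c0/b) + Polynomial.C (-a/b) * Polynomial.X) = B 1
        simp only [Polynomial.eval_add, Polynomial.eval_mul, Polynomial.eval_C, Polynomial.eval_X]
        rw [div_mul_eq_mul_div, ← add_div, div_eq_iff hb]
        linarith
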